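/- arXiv:math/0309030 — 4 statements merged into one kernel-verified Lean document; each statement's English description precedes it below -/
import Mathlib

section
/- The union of the six tetrahedra T_I, T_II, T_III, T_IV, T_V, T_VI equals the brick K; that is, T_I ∪ T_II ∪ T_III ∪ T_IV ∪ T_V ∪ T_VI = [0,a] × [0,b] × [0,c]. -/
private lemma mem_hull4 {V : Type*} [AddCommGroup V] [Module ℝ V]
    (p q r s x : V) (α β γ δ : ℝ)
    (hα : 0 ≤ α) (hβ : 0 ≤ β) (hγ : 0 ≤ γ) (hδ : 0 ≤ δ)
    (hsum : α + β + γ + δ = 1)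
    (hx : x = α • p + β • q + γ • r + δ • s) :
    x ∈ convexHull ℝ ({p, q, r, s} : Set V) := by
  have hconv : Convex ℝ (convexHull ℝ ({p, q, r, s} : Set V)) := convex_convexHull ℝ _
  have h := hconv.sum_mem (t := (Finset.univ : Finset (Fin 4)))
    (w := ![α, β, γ, δ]) (z := ![p, q, r, s]) ?_ ?_ ?_
  · simpa [Fin.sum_univ_four, hx] using h
  · intro i _; fin_cases i <;> simpa
  · simp [Fin.sum_univ_four, hsum]
  · intro i _
    fin_cases i <;> exact subset_convexHull ℝ _ (by simp)

/-- The union of the six tetrahedra of the systematic subdivision equals the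
brick `K = [0,a] × [0,b] × [0,c]`. -/
theorem six_tetrahedra_union_eq_brick
    (a b c : ℝ) (ha : 0 < a) (hb : 0 < b) (hc : 0 < c)
    (vE vF vB vA vH vG vC vD : Fin 3 → ℝ)
    (hE : vE = ![0, 0, 0]) (hF : vF = ![a, 0, 0]) (hB : vB = ![a, 0, c])
    (hA : vA = ![0, 0, c]) (hH : vH = ![0, b, 0]) (hG : vG = ![a, b, 0])
    (hC : vC = ![a, b, c]) (hD : vD = ![0, b, c]) :
    convexHull ℝ {vH, vB, vC, vD} ∪ convexHull ℝ {vD, vA, vB, vE} ∪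
    convexHull ℝ {vE, vB, vH, vD} ∪ convexHull ℝ {vF, vC, vB, vH} ∪
    convexHull ℝ {vH, vG, vF, vC} ∪ convexHull ℝ {vE, vF, vB, vH} =
      Set.Icc (0 : Fin 3 → ℝ) ![a, b, c] := by
  subst hE hF hB hA hH hG hC hD
  have hv : ∀ p q r : ℝ, 0 ≤ p → p ≤ a → 0 ≤ q → q ≤ b → 0 ≤ r → r ≤ c →
      (![p, q, r] : Fin 3 → ℝ) ∈ Set.Icc (0 : Fin 3 → ℝ) ![a, b, c] := by
    intro p q r h1 h2 h3 h4 h5 h6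
    refine ⟨fun i => ?_, fun i => ?_⟩ <;> fin_cases i <;>
      simp <;> first | assumption | linarith
  have hEm := hv 0 0 0 le_rfl ha.le le_rfl hb.le le_rfl hc.le
  have hFm := hv a 0 0 ha.le le_rfl le_rfl hb.le le_rfl hc.le
  have hBm := hv a 0 c ha.le le_rfl le_rfl hb.le hc.le le_rfl
  have hAm := hv 0 0 c le_rfl ha.le le_rfl hb.le hc.le le_rfl
  have hHm := hv 0 b 0 le_rfl ha.le hb.le le_rfl le_rfl hc.le
  have hGm := hv a b 0 ha.le le_rfl hb.le le_rfl le_rfl hc.le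
  have hCm := hv a b c ha.le le_rfl hb.le le_rfl hc.le le_rfl
  have hDm := hv 0 b c le_rfl ha.le hb.le le_rfl hc.le le_rfl
  ext x
  constructor
  · intro hx
    rcases hx with ((((h | h) | h) | h) | h) | h <;>
      refine convexHull_min ?_ (convex_Icc _ _) h <;>
      rintro y (rfl | rfl | rfl | rfl) <;>
      first
        | exact hEm | exact hFm | exact hBm | exact hAm
        | exact hHm | exact hGm | exact hCm | exact hDm
  · rintro ⟨h0, h1⟩
    have hx0 : 0 ≤ x 0 := by simpa using h0 0
    have hx1 : 0 ≤ x 1 := by simpa using h0 1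
    have hx2 : 0 ≤ x 2 := by simpa using h0 2
    have hx0' : x 0 ≤ a := by simpa using h1 0
    have hx1' : x 1 ≤ b := by simpa using h1 1
    have hx2' : x 2 ≤ c := by simpa using h1 2
    set s := x 0 / a with hs
    set t := x 1 / b with ht
    set u := x 2 / c with hu
    have hs0 : 0 ≤ s := div_nonneg hx0 ha.le
    have hs1 : s ≤ 1 := (div_le_one ha).2 hx0'
    have ht0 : 0 ≤ t := div_nonneg hx1 hb.le
    have ht1 : t ≤ 1 := (div_le_one hb).2 hx1'
    have hu0 : 0 ≤ u := div_nonneg hx2 hc.le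
    have hu1 : u ≤ 1 := (div_le_one hc).2 hx2'
    have hxs : x 0 = s * a := by rw [hs, div_mul_cancel₀ _ ha.ne']
    have hxt : x 1 = t * b := by rw [ht, div_mul_cancel₀ _ hb.ne']
    have hxu : x 2 = u * c := by rw [hu, div_mul_cancel₀ _ hc.ne']
    rcases le_total u s with hus | hsu
    · rcases le_total (s + t) 1 with hst | hst
      · -- T_VI {E, F, B, H}
        right
        refine mem_hull4 _ _ _ _ x (1 - s - t) (s - u) u t
          (by linarith) (by linarith) hu0 ht0 (by ring) ?_
        funext i; fin_cases i <;>
          simp [Pi.add_apply, Pi.smul_apply, smul_eq_mul, hxs, hxt, hxu] <;> ring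
      · rcases le_total u (s + t - 1) with h5 | h5
        · -- T_V {H, G, F, C}
          left; right
          refine mem_hull4 _ _ _ _ x (1 - s) (s + t - u - 1) (1 - t) u
            (by linarith) (by linarith) (by linarith) hu0 (by ring) ?_
          funext i; fin_cases i <;>
            simp [Pi.add_apply, Pi.smul_apply, smul_eq_mul, hxs, hxt, hxu] <;> ring
        · -- T_IV {F, C, B, H}
          left; left; right
          refine mem_hull4 _ _ _ _ x (s - u) (s + t - 1) (u + 1 - s - t) (1 - s)
            (by linarith) (by linarith) (by linarith) (by linarith) (by ring) ?_
          funext i; fin_cases i <;>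
            simp [Pi.add_apply, Pi.smul_apply, smul_eq_mul, hxs, hxt, hxu] <;> ring
    · rcases le_total 1 (s + t) with hst | hst
      · -- T_I {H, B, C, D}
        left; left; left; left; left
        refine mem_hull4 _ _ _ _ x (1 - u) (1 - t) (s + t - 1) (u - s)
          (by linarith) (by linarith) (by linarith) (by linarith) (by ring) ?_
        funext i; fin_cases i <;>
          simp [Pi.add_apply, Pi.smul_apply, smul_eq_mul, hxs, hxt, hxu] <;> ring
      · rcases le_total u (s + t) with h5 | h5
        · -- T_III {E, B, H, D}
          left; left; left; right
          refine mem_hull4 _ _ _ _ x (1 - s - t) s (s + t - u) (u - s)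
            (by linarith) hs0 (by linarith) (by linarith) (by ring) ?_
          funext i; fin_cases i <;>
            simp [Pi.add_apply, Pi.smul_apply, smul_eq_mul, hxs, hxt, hxu] <;> ring
        · -- T_II {D, A, B, E}
          left; left; left; left; right
          refine mem_hull4 _ _ _ _ x t (u - s - t) s (1 - u)
            ht0 (by linarith) hs0 (by linarith) (by ring) ?_
          funext i; fin_cases i <;>
            simp [Pi.add_apply, Pi.smul_apply, smul_eq_mul, hxs, hxt, hxu] <;> ring
end

section
/- Define the two prisms P₁ = {(x,y,z) ∈ K : a·z ≥ c·x} and P₂ = {(x,y,z) ∈ K : a·z ≤ c·x}, obtained by cutting K along the vertical plane through the diagonals EB and HC. Then T_I ∪ T_II ∪ T_III = P₁, T_IV ∪ T_V ∪ T_VI = P₂, and each of the two prisms has volume abc/2. -/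
set_option maxHeartbeats 1000000


open MeasureTheory

private lemma mem_hull4_s3 {E : Type*} [AddCommGroup E] [Module ℝ E] (v0 v1 v2 v3 : E)
    {w0 w1 w2 w3 : ℝ} (h0 : 0 ≤ w0) (h1 : 0 ≤ w1) (h2 : 0 ≤ w2) (h3 : 0 ≤ w3)
    (hs : w0 + w1 + w2 + w3 = 1) :
    w0 • v0 + w1 • v1 + w2 • v2 + w3 • v3 ∈ convexHull ℝ ({v0, v1, v2, v3} : Set E) := by
  have hc := convex_convexHull ℝ ({v0, v1, v2, v3} : Set E)
  have key : ∑ i : Fin 4, (![w0,w1,w2,w3] i) • (![v0,v1,v2,v3] i) ∈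
      convexHull ℝ ({v0, v1, v2, v3} : Set E) :=
    hc.sum_mem (fun i _ => by fin_cases i <;> simpa)
      (by simpa [Fin.sum_univ_four] using hs)
      (fun i _ => subset_convexHull ℝ _ (by fin_cases i <;> simp))
  simpa [Fin.sum_univ_four, add_assoc] using key

/-- Cutting the brick `K` along the vertical diagonal plane `a·z = c·x` gives
two prisms `P₁`, `P₂`; the first three tetrahedra of the subdivision fill `P₁`,
the last three fill `P₂`, and each prism has volume `a*b*c/2`. -/
theorem three_tetrahedra_fill_each_prism
    (a b c : ℝ) (ha : 0 < a) (hb : 0 < b) (hc : 0 < c)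
    (vE vF vB vA vH vG vC vD : Fin 3 → ℝ)
    (hE : vE = ![0, 0, 0]) (hF : vF = ![a, 0, 0]) (hB : vB = ![a, 0, c])
    (hA : vA = ![0, 0, c]) (hH : vH = ![0, b, 0]) (hG : vG = ![a, b, 0])
    (hC : vC = ![a, b, c]) (hD : vD = ![0, b, c])
    (K P₁ P₂ : Set (Fin 3 → ℝ))
    (hK : K = Set.Icc (0 : Fin 3 → ℝ) ![a, b, c])
    (hP₁ : P₁ = {p ∈ K | a * p 2 ≥ c * p 0})
    (hP₂ : P₂ = {p ∈ K | a * p 2 ≤ c * p 0}) :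
    convexHull ℝ {vH, vB, vC, vD} ∪ convexHull ℝ {vD, vA, vB, vE} ∪
        convexHull ℝ {vE, vB, vH, vD} = P₁ ∧
    convexHull ℝ {vF, vC, vB, vH} ∪ convexHull ℝ {vH, vG, vF, vC} ∪
        convexHull ℝ {vE, vF, vB, vH} = P₂ ∧
    volume P₁ = ENNReal.ofReal (a * b * c / 2) ∧
    volume P₂ = ENNReal.ofReal (a * b * c / 2) := by
  have ha' : a ≠ 0 := ha.ne'
  have hb' : b ≠ 0 := hb.ne'
  have hc' : c ≠ 0 := hc.ne'
  subst hE hF hB hA hH hG hC hD hK hP₁ hP₂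
  set K : Set (Fin 3 → ℝ) := Set.Icc 0 ![a, b, c] with hKdef
  -- membership in the box from explicit coordinates
  have memK : ∀ x y z : ℝ, 0 ≤ x → x ≤ a → 0 ≤ y → y ≤ b → 0 ≤ z → z ≤ c →
      (![x, y, z] : Fin 3 → ℝ) ∈ K := by
    intro x y z h1 h2 h3 h4 h5 h6
    refine ⟨fun i => ?_, fun i => ?_⟩ <;> fin_cases i <;> simpa
  -- coordinates of a point in the box
  have coordK : ∀ p : Fin 3 → ℝ, p ∈ K →
      0 ≤ p 0 ∧ p 0 ≤ a ∧ 0 ≤ p 1 ∧ p 1 ≤ b ∧ 0 ≤ p 2 ∧ p 2 ≤ c := by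
    intro p hp
    exact ⟨by simpa using hp.1 0, by simpa using hp.2 0, by simpa using hp.1 1,
      by simpa using hp.2 1, by simpa using hp.1 2, by simpa using hp.2 2⟩
  -- convexity of the two prisms
  have hlin : IsLinearMap ℝ (fun p : Fin 3 → ℝ => c * p 0 - a * p 2) :=
    ⟨fun p q => by simp only [Pi.add_apply]; ring, fun r p => by
      simp only [Pi.smul_apply, smul_eq_mul]; ring⟩
  have hconv₁ : Convex ℝ {p ∈ K | a * p 2 ≥ c * p 0} := by
    have he : {p ∈ K | a * p 2 ≥ c * p 0} =
        K ∩ {p : Fin 3 → ℝ | c * p 0 - a * p 2 ≤ 0} := by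
      ext p; simp only [Set.mem_sep_iff, Set.mem_inter_iff, Set.mem_setOf_eq, ge_iff_le,
        sub_nonpos]
    rw [he]
    exact (convex_Icc _ _).inter (convex_halfSpace_le hlin 0)
  have hconv₂ : Convex ℝ {p ∈ K | a * p 2 ≤ c * p 0} := by
    have he : {p ∈ K | a * p 2 ≤ c * p 0} =
        K ∩ {p : Fin 3 → ℝ | 0 ≤ c * p 0 - a * p 2} := by
      ext p; simp only [Set.mem_sep_iff, Set.mem_inter_iff, Set.mem_setOf_eq, sub_nonneg]
    rw [he]
    exact (convex_Icc _ _).inter (convex_halfSpace_ge hlin 0)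
  -- vertex memberships
  have memP₁ : ∀ x y z : ℝ, 0 ≤ x → x ≤ a → 0 ≤ y → y ≤ b → 0 ≤ z → z ≤ c → c * x ≤ a * z →
      (![x, y, z] : Fin 3 → ℝ) ∈ {p ∈ K | a * p 2 ≥ c * p 0} := by
    intro x y z h1 h2 h3 h4 h5 h6 h7
    exact ⟨memK x y z h1 h2 h3 h4 h5 h6, by simpa using h7⟩
  have memP₂ : ∀ x y z : ℝ, 0 ≤ x → x ≤ a → 0 ≤ y → y ≤ b → 0 ≤ z → z ≤ c → a * z ≤ c * x →
      (![x, y, z] : Fin 3 → ℝ) ∈ {p ∈ K | a * p 2 ≤ c * p 0} := by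
    intro x y z h1 h2 h3 h4 h5 h6 h7
    exact ⟨memK x y z h1 h2 h3 h4 h5 h6, by simpa using h7⟩
  -- First union equals P₁
  have hU₁ : convexHull ℝ {![0,b,0], ![a,0,c], ![a,b,c], ![0,b,c]} ∪
      convexHull ℝ {![0,b,c], ![0,0,c], ![a,0,c], ![0,0,0]} ∪
      convexHull ℝ {![(0:ℝ),0,0], ![a,0,c], ![0,b,0], ![0,b,c]} =
      {p ∈ K | a * p 2 ≥ c * p 0} := by
    apply Set.Subset.antisymm
    · refine Set.union_subset (Set.union_subset ?_ ?_) ?_ <;>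
        refine convexHull_min ?_ hconv₁ <;>
        simp only [Set.insert_subset_iff, Set.singleton_subset_iff] <;>
        refine ⟨?_, ?_, ?_, ?_⟩ <;>
        apply memP₁ <;> first | positivity | nlinarith
    · rintro p ⟨hpK, hpz⟩
      obtain ⟨hx0, hxa, hy0, hyb, hz0, hzc⟩ := coordK p hpK
      rw [ge_iff_le] at hpz
      rcases le_or_gt (a * c * p 1) (a * b * p 2 - b * c * p 0) with h1 | h1
      · -- T_II
        refine Set.mem_union_left _ (Set.mem_union_right _ ?_)
        have hrep : p = (p 1 / b) • (![0,b,c] : Fin 3 → ℝ)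
            + (p 2 / c - p 1 / b - p 0 / a) • ![0,0,c]
            + (p 0 / a) • ![a,0,c] + (1 - p 2 / c) • ![0,0,0] := by
          funext i; fin_cases i <;> simp <;> field_simp <;> ring
        rw [hrep]
        refine mem_hull4_s3 _ _ _ _ (by positivity) ?_ (by positivity) ?_ (by ring)
        · have he : p 2 / c - p 1 / b - p 0 / a
              = (a * b * p 2 - b * c * p 0 - a * c * p 1) / (a * b * c) := by
            field_simp; ring
          rw [he]; exact div_nonneg (by linarith) (by positivity)
        · have : p 2 / c ≤ 1 := by
            rw [div_le_one hc]; exact hzc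
          linarith
      · rcases le_or_gt (a * p 1) (a * b - b * p 0) with h2 | h2
        · -- T_III
          refine Set.mem_union_right _ ?_
          have hrep : p = (1 - p 0 / a - p 1 / b) • (![(0:ℝ),0,0] : Fin 3 → ℝ)
              + (p 0 / a) • ![a,0,c]
              + (p 0 / a + p 1 / b - p 2 / c) • ![0,b,0]
              + (p 2 / c - p 0 / a) • ![0,b,c] := by
            funext i; fin_cases i <;> simp <;> field_simp <;> ring
          rw [hrep]
          refine mem_hull4_s3 _ _ _ _ ?_ (by positivity) ?_ ?_ (by ring)
          · have he : 1 - p 0 / a - p 1 / b = (a * b - b * p 0 - a * p 1) / (a * b) := by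
              field_simp
            rw [he]; exact div_nonneg (by linarith) (by positivity)
          · have he : p 0 / a + p 1 / b - p 2 / c
                = (b * c * p 0 + a * c * p 1 - a * b * p 2) / (a * b * c) := by
              field_simp
            rw [he]; exact div_nonneg (by linarith) (by positivity)
          · have he : p 2 / c - p 0 / a = (a * p 2 - c * p 0) / (a * c) := by
              field_simp
            rw [he]; exact div_nonneg (by linarith) (by positivity)
        · -- T_I
          refine Set.mem_union_left _ (Set.mem_union_left _ ?_)
          have hrep : p = (1 - p 2 / c) • (![0,b,0] : Fin 3 → ℝ)
              + (1 - p 1 / b) • ![a,0,c]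
              + (p 0 / a + p 1 / b - 1) • ![a,b,c]
              + (p 2 / c - p 0 / a) • ![0,b,c] := by
            funext i; fin_cases i <;> simp <;> field_simp <;> ring
          rw [hrep]
          refine mem_hull4_s3 _ _ _ _ ?_ ?_ ?_ ?_ (by ring)
          · have : p 2 / c ≤ 1 := by rw [div_le_one hc]; exact hzc
            linarith
          · have : p 1 / b ≤ 1 := by rw [div_le_one hb]; exact hyb
            linarith
          · have he : p 0 / a + p 1 / b - 1 = (b * p 0 + a * p 1 - a * b) / (a * b) := by
              field_simp
            rw [he]; exact div_nonneg (by linarith) (by positivity)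
          · have he : p 2 / c - p 0 / a = (a * p 2 - c * p 0) / (a * c) := by
              field_simp
            rw [he]; exact div_nonneg (by linarith) (by positivity)
  -- Second union equals P₂
  have hU₂ : convexHull ℝ {![a,0,0], ![a,b,c], ![a,0,c], ![0,b,0]} ∪
      convexHull ℝ {![0,b,0], ![a,b,0], ![a,0,0], ![a,b,c]} ∪
      convexHull ℝ {![(0:ℝ),0,0], ![a,0,0], ![a,0,c], ![0,b,0]} =
      {p ∈ K | a * p 2 ≤ c * p 0} := by
    apply Set.Subset.antisymm
    · refine Set.union_subset (Set.union_subset ?_ ?_) ?_ <;>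
        refine convexHull_min ?_ hconv₂ <;>
        simp only [Set.insert_subset_iff, Set.singleton_subset_iff] <;>
        refine ⟨?_, ?_, ?_, ?_⟩ <;>
        apply memP₂ <;> first | positivity | nlinarith
    · rintro p ⟨hpK, hpz⟩
      obtain ⟨hx0, hxa, hy0, hyb, hz0, hzc⟩ := coordK p hpK
      rcases le_or_gt (a * p 1) (a * b - b * p 0) with h1 | h1
      · -- T_VI
        refine Set.mem_union_right _ ?_
        have hrep : p = (1 - p 0 / a - p 1 / b) • (![(0:ℝ),0,0] : Fin 3 → ℝ)
            + (p 0 / a - p 2 / c) • ![a,0,0]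
            + (p 2 / c) • ![a,0,c] + (p 1 / b) • ![0,b,0] := by
          funext i; fin_cases i <;> simp <;> field_simp <;> ring
        rw [hrep]
        refine mem_hull4_s3 _ _ _ _ ?_ ?_ (by positivity) (by positivity) (by ring)
        · have he : 1 - p 0 / a - p 1 / b = (a * b - b * p 0 - a * p 1) / (a * b) := by
            field_simp
          rw [he]; exact div_nonneg (by linarith) (by positivity)
        · have he : p 0 / a - p 2 / c = (c * p 0 - a * p 2) / (a * c) := by
            field_simp
          rw [he]; exact div_nonneg (by linarith) (by positivity)
      · rcases le_or_gt (b * c * p 0 + a * c * p 1) (a * b * c + a * b * p 2) with h2 | h2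
        · -- T_IV
          refine Set.mem_union_left _ (Set.mem_union_left _ ?_)
          have hrep : p = (p 0 / a - p 2 / c) • (![a,0,0] : Fin 3 → ℝ)
              + (p 0 / a + p 1 / b - 1) • ![a,b,c]
              + (p 2 / c - p 0 / a - p 1 / b + 1) • ![a,0,c]
              + (1 - p 0 / a) • ![0,b,0] := by
            funext i; fin_cases i <;> simp <;> field_simp <;> ring
          rw [hrep]
          refine mem_hull4_s3 _ _ _ _ ?_ ?_ ?_ ?_ (by ring)
          · have he : p 0 / a - p 2 / c = (c * p 0 - a * p 2) / (a * c) := by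
              field_simp
            rw [he]; exact div_nonneg (by linarith) (by positivity)
          · have he : p 0 / a + p 1 / b - 1 = (b * p 0 + a * p 1 - a * b) / (a * b) := by
              field_simp
            rw [he]; exact div_nonneg (by linarith) (by positivity)
          · have he : p 2 / c - p 0 / a - p 1 / b + 1
                = (a * b * c + a * b * p 2 - b * c * p 0 - a * c * p 1) / (a * b * c) := by
              field_simp; ring
            rw [he]; exact div_nonneg (by linarith) (by positivity)
          · have : p 0 / a ≤ 1 := by rw [div_le_one ha]; exact hxa
            linarith
        · -- T_V
          refine Set.mem_union_left _ (Set.mem_union_right _ ?_)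
          have hrep : p = (1 - p 0 / a) • (![0,b,0] : Fin 3 → ℝ)
              + (p 0 / a + p 1 / b - p 2 / c - 1) • ![a,b,0]
              + (1 - p 1 / b) • ![a,0,0] + (p 2 / c) • ![a,b,c] := by
            funext i; fin_cases i <;> simp <;> field_simp <;> ring
          rw [hrep]
          refine mem_hull4_s3 _ _ _ _ ?_ ?_ ?_ (by positivity) (by ring)
          · have : p 0 / a ≤ 1 := by rw [div_le_one ha]; exact hxa
            linarith
          · have he : p 0 / a + p 1 / b - p 2 / c - 1
                = (b * c * p 0 + a * c * p 1 - a * b * p 2 - a * b * c) / (a * b * c) := by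
              field_simp
            rw [he]; exact div_nonneg (by linarith) (by positivity)
          · have : p 1 / b ≤ 1 := by rw [div_le_one hb]; exact hyb
            linarith
  -- volume computations
  have hKvol : volume K = ENNReal.ofReal (a * b * c) := by
    rw [hKdef, Real.volume_Icc_pi]
    rw [Fin.prod_univ_three]
    simp only [Matrix.cons_val_zero, Matrix.cons_val_one, Matrix.head_cons, Pi.zero_apply,
      sub_zero]
    rw [← ENNReal.ofReal_mul ha.le, ← ENNReal.ofReal_mul (by positivity)]
    norm_num [Matrix.cons_val_two]
  -- the map swapping the two prisms
  set M : Matrix (Fin 3) (Fin 3) ℝ := !![0,0,a/c; 0,1,0; c/a,0,0] with hM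
  set f : (Fin 3 → ℝ) →ₗ[ℝ] (Fin 3 → ℝ) := Matrix.toLin' M with hf
  have hdet : LinearMap.det f = -1 := by
    rw [hf, LinearMap.det_toLin', hM, Matrix.det_fin_three]
    simp
    field_simp
  have hfapp : ∀ p : Fin 3 → ℝ, f p = ![a / c * p 2, p 1, c / a * p 0] := by
    intro p
    funext i
    fin_cases i <;>
      simp [hf, hM, Matrix.toLin'_apply, Matrix.mulVec, dotProduct,
        Fin.sum_univ_three]
  have himg : f '' {p ∈ K | a * p 2 ≥ c * p 0} = {p ∈ K | a * p 2 ≤ c * p 0} := by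
    have hmap₁ : ∀ p ∈ {p ∈ K | a * p 2 ≥ c * p 0}, f p ∈ {p ∈ K | a * p 2 ≤ c * p 0} := by
      rintro p ⟨hpK, hpz⟩
      obtain ⟨hx0, hxa, hy0, hyb, hz0, hzc⟩ := coordK p hpK
      rw [hfapp]
      refine ⟨memK _ _ _ (by positivity) ?_ hy0 hyb (by positivity) ?_, ?_⟩
      · rw [div_mul_eq_mul_div, div_le_iff₀ hc]; nlinarith
      · rw [div_mul_eq_mul_div, div_le_iff₀ ha]; nlinarith
      · have h1 : (![a / c * p 2, p 1, c / a * p 0] : Fin 3 → ℝ) 2 = c / a * p 0 := by simp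
        have h2 : (![a / c * p 2, p 1, c / a * p 0] : Fin 3 → ℝ) 0 = a / c * p 2 := by simp
        rw [h1, h2]
        rw [ge_iff_le] at hpz
        have : a * (c / a * p 0) = c * p 0 := by field_simp
        rw [this]
        have : c * (a / c * p 2) = a * p 2 := by field_simp
        rw [this]
        exact hpz
    have hmap₂ : ∀ p ∈ {p ∈ K | a * p 2 ≤ c * p 0}, f p ∈ {p ∈ K | a * p 2 ≥ c * p 0} := by
      rintro p ⟨hpK, hpz⟩
      obtain ⟨hx0, hxa, hy0, hyb, hz0, hzc⟩ := coordK p hpK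
      rw [hfapp]
      refine ⟨memK _ _ _ (by positivity) ?_ hy0 hyb (by positivity) ?_, ?_⟩
      · rw [div_mul_eq_mul_div, div_le_iff₀ hc]; nlinarith
      · rw [div_mul_eq_mul_div, div_le_iff₀ ha]; nlinarith
      · have h1 : (![a / c * p 2, p 1, c / a * p 0] : Fin 3 → ℝ) 2 = c / a * p 0 := by simp
        have h2 : (![a / c * p 2, p 1, c / a * p 0] : Fin 3 → ℝ) 0 = a / c * p 2 := by simp
        rw [ge_iff_le, h1, h2]
        have e1 : a * (c / a * p 0) = c * p 0 := by field_simp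
        have e2 : c * (a / c * p 2) = a * p 2 := by field_simp
        rw [e1, e2]
        exact hpz
    have hinv : ∀ p : Fin 3 → ℝ, f (f p) = p := by
      intro p
      rw [hfapp, hfapp]
      funext i
      fin_cases i <;> simp <;> field_simp <;> ring
    apply Set.Subset.antisymm
    · rintro q ⟨p, hp, rfl⟩
      exact hmap₁ p hp
    · intro q hq
      exact ⟨f q, hmap₂ q hq, hinv q⟩
  have hvol_eq : volume {p ∈ K | a * p 2 ≤ c * p 0} = volume {p ∈ K | a * p 2 ≥ c * p 0} := by
    rw [← himg, Measure.addHaar_image_linearMap, hdet]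
    norm_num
  -- union is K, intersection is null
  have hunion : {p ∈ K | a * p 2 ≥ c * p 0} ∪ {p ∈ K | a * p 2 ≤ c * p 0} = K := by
    ext p
    constructor
    · rintro (⟨h, _⟩ | ⟨h, _⟩) <;> exact h
    · intro h
      rcases le_total (c * p 0) (a * p 2) with h' | h'
      · exact Or.inl ⟨h, h'⟩
      · exact Or.inr ⟨h, h'⟩
  set L : (Fin 3 → ℝ) →ₗ[ℝ] ℝ := a • LinearMap.proj 2 - c • LinearMap.proj 0 with hL
  have hLapp : ∀ p : Fin 3 → ℝ, L p = a * p 2 - c * p 0 := by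
    intro p; simp [hL]
  have hker_ne : LinearMap.ker L ≠ ⊤ := by
    intro h
    have h1 : (![(0:ℝ), 0, 1] : Fin 3 → ℝ) ∈ LinearMap.ker L := h ▸ Submodule.mem_top
    rw [LinearMap.mem_ker, hLapp] at h1
    simp at h1
    exact ha' h1
  have hnull : volume ({p ∈ K | a * p 2 ≥ c * p 0} ∩ {p ∈ K | a * p 2 ≤ c * p 0}) = 0 := by
    have hsub : {p ∈ K | a * p 2 ≥ c * p 0} ∩ {p ∈ K | a * p 2 ≤ c * p 0}
        ⊆ (LinearMap.ker L : Set (Fin 3 → ℝ)) := by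
      rintro p ⟨⟨_, h1⟩, ⟨_, h2⟩⟩
      rw [SetLike.mem_coe, LinearMap.mem_ker, hLapp]
      rw [ge_iff_le] at h1
      linarith [le_antisymm h2 h1]
    exact measure_mono_null hsub (Measure.addHaar_submodule volume (LinearMap.ker L) hker_ne)
  have hmeas₂ : MeasurableSet {p ∈ K | a * p 2 ≤ c * p 0} := by
    have : {p ∈ K | a * p 2 ≤ c * p 0} = K ∩ {p : Fin 3 → ℝ | a * p 2 ≤ c * p 0} := rfl
    rw [this]
    exact measurableSet_Icc.inter
      (measurableSet_le (by fun_prop)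
        (by fun_prop))
  have hsum : volume {p ∈ K | a * p 2 ≥ c * p 0} + volume {p ∈ K | a * p 2 ≤ c * p 0}
      = ENNReal.ofReal (a * b * c) := by
    rw [← measure_union_add_inter _ hmeas₂, hunion, hnull, add_zero, hKvol]
  have hvol₁ : volume {p ∈ K | a * p 2 ≥ c * p 0} = ENNReal.ofReal (a * b * c / 2) := by
    rw [hvol_eq] at hsum
    rw [← two_mul] at hsum
    have h2 : ENNReal.ofReal (a * b * c) = 2 * ENNReal.ofReal (a * b * c / 2) := by
      rw [← ENNReal.ofReal_ofNat, ← ENNReal.ofReal_mul (by norm_num)]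
      congr 1
      ring
    rw [h2] at hsum
    exact (ENNReal.mul_right_inj (by norm_num) (by norm_num)).mp hsum
  have hvol₂ : volume {p ∈ K | a * p 2 ≤ c * p 0} = ENNReal.ofReal (a * b * c / 2) := by
    rw [hvol_eq]
    exact hvol₁
  exact ⟨hU₁, hU₂, hvol₁, hvol₂⟩
end

section
/- Let σ : ℝ³ → ℝ³ be the linear map σ(x,y,z) = ((a/c)·z, y, (c/a)·x). Then σ is an involution (σ ∘ σ = id) with determinant of absolute value 1 (hence volume-preserving), it maps the brick K onto itself and the prism P₁ = {(x,y,z) ∈ K : a·z ≥ c·x} onto the prism P₂ = {(x,y,z) ∈ K : a·z ≤ c·x}, and the images σ(T_I) = conv{H,B,C,G}, σ(T_II) = conv{G,F,B,E}, σ(T_III) = conv{E,B,H,G} are three tetrahedra with pairwise disjoint interiors whose union is P₂. (Thus the three tetrahedra on one prism are reflections, about the vertical diagonal plane a·z = c·x, of three tetrahedra subdividing the other prism.) -/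
open MeasureTheory

lemma mem_hull4' {v1 v2 v3 v4 p : Fin 3 → ℝ} {w1 w2 w3 w4 : ℝ}
    (h1 : 0 ≤ w1) (h2 : 0 ≤ w2) (h3 : 0 ≤ w3) (h4 : 0 ≤ w4)
    (hsum : w1 + w2 + w3 + w4 = 1)
    (hp : p = w1 • v1 + w2 • v2 + w3 • v3 + w4 • v4) :
    p ∈ convexHull ℝ ({v1, v2, v3, v4} : Set (Fin 3 → ℝ)) := by
  subst hp
  have hc : Convex ℝ (convexHull ℝ ({v1, v2, v3, v4} : Set (Fin 3 → ℝ))) :=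
    convex_convexHull ℝ _
  have := hc.sum_mem (t := Finset.univ) (w := ![w1, w2, w3, w4]) (z := ![v1, v2, v3, v4])
    (by intro i _; fin_cases i <;> simpa)
    (by simpa [Fin.sum_univ_four] using hsum)
    (by intro i _
        fin_cases i <;>
          [skip; skip; skip; skip] <;>
          exact subset_convexHull ℝ _ (by simp))
  rw [Fin.sum_univ_four] at this
  simpa using this


lemma vec_eta' (p : Fin 3 → ℝ) : p = ![p 0, p 1, p 2] := by
  funext i; fin_cases i <;> rfl


lemma interior_half' {c0 c1 c2 r : ℝ} {s : Set (Fin 3 → ℝ)} (v : Fin 3 → ℝ)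
    (hv : 0 < c0 * v 0 + c1 * v 1 + c2 * v 2)
    (hs : ∀ p ∈ s, c0 * p 0 + c1 * p 1 + c2 * p 2 ≤ r)
    {p : Fin 3 → ℝ} (hp : p ∈ interior s) :
    c0 * p 0 + c1 * p 1 + c2 * p 2 < r := by
  obtain ⟨ε, hε, hball⟩ := Metric.mem_nhds_iff.mp (mem_interior_iff_mem_nhds.mp hp)
  set t : ℝ := ε / (2 * (‖v‖ + 1)) with ht
  have hnv : (0:ℝ) ≤ ‖v‖ := norm_nonneg v
  have htpos : 0 < t := by positivity
  have hq : p + t • v ∈ s := by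
    apply hball
    have hd : dist (p + t • v) p = ‖t • v‖ := dist_self_add_left _ _
    rw [Metric.mem_ball, hd, norm_smul, Real.norm_eq_abs, abs_of_pos htpos]
    rw [ht, div_mul_eq_mul_div, div_lt_iff₀ (by positivity)]
    nlinarith
  have := hs _ hq
  simp only [Pi.add_apply, Pi.smul_apply, smul_eq_mul] at this
  nlinarith


-- S0 = conv {H, B, C, G}
set_option maxHeartbeats 1000000 in
lemma tetra0' (a b c : ℝ) (ha : 0 < a) (hb : 0 < b) (hc : 0 < c) :
    convexHull ℝ ({![0,b,0], ![a,0,c], ![a,b,c], ![a,b,0]} : Set (Fin 3 → ℝ)) =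
      {p : Fin 3 → ℝ | p 0 ≤ a ∧ p 1 ≤ b ∧ a*b*c ≤ a*c*p 1 + a*b*p 2 ∧ a*p 2 ≤ c*p 0} := by
  have ha' : a ≠ 0 := ne_of_gt ha
  have hb' : b ≠ 0 := ne_of_gt hb
  have hc' : c ≠ 0 := ne_of_gt hc
  apply Set.Subset.antisymm
  · apply convexHull_min
    · intro q hq
      simp only [Set.mem_insert_iff, Set.mem_singleton_iff] at hq
      rcases hq with rfl | rfl | rfl | rfl <;>
        refine ⟨?_, ?_, ?_, ?_⟩ <;> norm_num [Matrix.cons_val_two] <;>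
        nlinarith [mul_pos (mul_pos ha hb) hc, mul_pos ha hc, mul_pos ha hb]
    · intro p hp q hq u v hu hv huv
      obtain ⟨hp1, hp2, hp3, hp4⟩ := hp
      obtain ⟨hq1, hq2, hq3, hq4⟩ := hq
      have habc : u * (a*b*c) + v * (a*b*c) = a*b*c := by rw [← add_mul, huv, one_mul]
      have ha' : u * a + v * a = a := by rw [← add_mul, huv, one_mul]
      have hb' : u * b + v * b = b := by rw [← add_mul, huv, one_mul]
      refine ⟨?_, ?_, ?_, ?_⟩ <;>
        simp only [Pi.add_apply, Pi.smul_apply, smul_eq_mul] <;>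
        nlinarith [mul_le_mul_of_nonneg_left hp1 hu, mul_le_mul_of_nonneg_left hq1 hv,
          mul_le_mul_of_nonneg_left hp2 hu, mul_le_mul_of_nonneg_left hq2 hv,
          mul_le_mul_of_nonneg_left hp3 hu, mul_le_mul_of_nonneg_left hq3 hv,
          mul_le_mul_of_nonneg_left hp4 hu, mul_le_mul_of_nonneg_left hq4 hv]
  · rintro p ⟨h1, h2, h3, h4⟩
    have heq : p = (1 - p 0 / a) • ![0,b,0] + (1 - p 1 / b) • ![a,0,c] +
        (p 2 / c - 1 + p 1 / b) • ![a,b,c] + (p 0 / a - p 2 / c) • ![a,b,0] := by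
      rw [vec_eta' p, Matrix.smul_vec3, Matrix.smul_vec3, Matrix.smul_vec3, Matrix.smul_vec3,
        Matrix.vec3_add, Matrix.vec3_add, Matrix.vec3_add]
      simp only [smul_eq_mul]
      exact Matrix.vec3_eq (by simp only [Matrix.cons_val_zero, Matrix.cons_val_one, Matrix.cons_val_two, Matrix.head_cons, Matrix.tail_cons]; field_simp; ring) (by simp only [Matrix.cons_val_zero, Matrix.cons_val_one, Matrix.cons_val_two, Matrix.head_cons, Matrix.tail_cons]; field_simp; ring) (by simp only [Matrix.cons_val_zero, Matrix.cons_val_one, Matrix.cons_val_two, Matrix.head_cons, Matrix.tail_cons]; field_simp; ring)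
    refine mem_hull4' ?_ ?_ ?_ ?_ ?_ heq
    · have h : 1 - p 0 / a = (a - p 0) / a := by field_simp
      rw [h]; exact div_nonneg (by linarith) ha.le
    · have h : 1 - p 1 / b = (b - p 1) / b := by field_simp
      rw [h]; exact div_nonneg (by linarith) hb.le
    · have h : p 2 / c - 1 + p 1 / b = (a*c*p 1 + a*b*p 2 - a*b*c) / (a*b*c) := by
        field_simp; ring
      rw [h]; exact div_nonneg (by linarith) (by positivity)
    · have h : p 0 / a - p 2 / c = (c*p 0 - a*p 2) / (a*c) := by field_simp
      rw [h]; exact div_nonneg (by linarith) (by positivity)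
    · field_simp
      ring

-- S1 = conv {G, F, B, E}
set_option maxHeartbeats 1000000 in
lemma tetra1' (a b c : ℝ) (ha : 0 < a) (hb : 0 < b) (hc : 0 < c) :
    convexHull ℝ ({![a,b,0], ![a,0,0], ![a,0,c], ![0,0,0]} : Set (Fin 3 → ℝ)) =
      {p : Fin 3 → ℝ | 0 ≤ p 1 ∧ 0 ≤ p 2 ∧ p 0 ≤ a ∧ a*c*p 1 + a*b*p 2 ≤ b*c*p 0} := by
  have ha' : a ≠ 0 := ne_of_gt ha
  have hb' : b ≠ 0 := ne_of_gt hb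
  have hc' : c ≠ 0 := ne_of_gt hc
  apply Set.Subset.antisymm
  · apply convexHull_min
    · intro q hq
      simp only [Set.mem_insert_iff, Set.mem_singleton_iff] at hq
      rcases hq with rfl | rfl | rfl | rfl <;>
        refine ⟨?_, ?_, ?_, ?_⟩ <;> norm_num [Matrix.cons_val_two] <;>
        nlinarith [mul_pos (mul_pos ha hb) hc, mul_pos ha hc, mul_pos ha hb, mul_pos hb hc]
    · intro p hp q hq u v hu hv huv
      obtain ⟨hp1, hp2, hp3, hp4⟩ := hp
      obtain ⟨hq1, hq2, hq3, hq4⟩ := hq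
      have ha2 : u * a + v * a = a := by rw [← add_mul, huv, one_mul]
      refine ⟨?_, ?_, ?_, ?_⟩ <;>
        simp only [Pi.add_apply, Pi.smul_apply, smul_eq_mul] <;>
        nlinarith [mul_le_mul_of_nonneg_left hp1 hu, mul_le_mul_of_nonneg_left hq1 hv,
          mul_le_mul_of_nonneg_left hp2 hu, mul_le_mul_of_nonneg_left hq2 hv,
          mul_le_mul_of_nonneg_left hp3 hu, mul_le_mul_of_nonneg_left hq3 hv,
          mul_le_mul_of_nonneg_left hp4 hu, mul_le_mul_of_nonneg_left hq4 hv]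
  · rintro p ⟨h1, h2, h3, h4⟩
    have heq : p = (p 1 / b) • ![a,b,0] + (p 0 / a - p 1 / b - p 2 / c) • ![a,0,0] +
        (p 2 / c) • ![a,0,c] + (1 - p 0 / a) • ![0,0,0] := by
      rw [vec_eta' p, Matrix.smul_vec3, Matrix.smul_vec3, Matrix.smul_vec3, Matrix.smul_vec3,
        Matrix.vec3_add, Matrix.vec3_add, Matrix.vec3_add]
      simp only [smul_eq_mul]
      exact Matrix.vec3_eq (by simp only [Matrix.cons_val_zero, Matrix.cons_val_one, Matrix.cons_val_two, Matrix.head_cons, Matrix.tail_cons]; field_simp; all_goals ring) (by simp only [Matrix.cons_val_zero, Matrix.cons_val_one, Matrix.cons_val_two, Matrix.head_cons, Matrix.tail_cons]; field_simp; all_goals ring) (by simp only [Matrix.cons_val_zero, Matrix.cons_val_one, Matrix.cons_val_two, Matrix.head_cons, Matrix.tail_cons]; field_simp; all_goals ring)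
    refine mem_hull4' ?_ ?_ ?_ ?_ ?_ heq
    · exact div_nonneg h1 hb.le
    · have h : p 0 / a - p 1 / b - p 2 / c = (b*c*p 0 - a*c*p 1 - a*b*p 2) / (a*b*c) := by
        field_simp
      rw [h]; exact div_nonneg (by linarith) (by positivity)
    · exact div_nonneg h2 hc.le
    · have h : 1 - p 0 / a = (a - p 0) / a := by field_simp
      rw [h]; exact div_nonneg (by linarith) ha.le
    · field_simp
      all_goals ring

-- S2 = conv {E, B, H, G}
set_option maxHeartbeats 1000000 in
lemma tetra2' (a b c : ℝ) (ha : 0 < a) (hb : 0 < b) (hc : 0 < c) :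
    convexHull ℝ ({![0,0,0], ![a,0,c], ![0,b,0], ![a,b,0]} : Set (Fin 3 → ℝ)) =
      {p : Fin 3 → ℝ | 0 ≤ p 2 ∧ a*p 2 ≤ c*p 0 ∧ b*c*p 0 ≤ a*c*p 1 + a*b*p 2 ∧
        a*c*p 1 + a*b*p 2 ≤ a*b*c} := by
  have ha' : a ≠ 0 := ne_of_gt ha
  have hb' : b ≠ 0 := ne_of_gt hb
  have hc' : c ≠ 0 := ne_of_gt hc
  apply Set.Subset.antisymm
  · apply convexHull_min
    · intro q hq
      simp only [Set.mem_insert_iff, Set.mem_singleton_iff] at hq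
      rcases hq with rfl | rfl | rfl | rfl <;>
        refine ⟨?_, ?_, ?_, ?_⟩ <;> norm_num [Matrix.cons_val_two] <;>
        nlinarith [mul_pos (mul_pos ha hb) hc, mul_pos ha hc, mul_pos ha hb, mul_pos hb hc]
    · intro p hp q hq u v hu hv huv
      obtain ⟨hp1, hp2, hp3, hp4⟩ := hp
      obtain ⟨hq1, hq2, hq3, hq4⟩ := hq
      have habc : u * (a*b*c) + v * (a*b*c) = a*b*c := by rw [← add_mul, huv, one_mul]
      refine ⟨?_, ?_, ?_, ?_⟩ <;>
        simp only [Pi.add_apply, Pi.smul_apply, smul_eq_mul] <;>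
        nlinarith [mul_le_mul_of_nonneg_left hp1 hu, mul_le_mul_of_nonneg_left hq1 hv,
          mul_le_mul_of_nonneg_left hp2 hu, mul_le_mul_of_nonneg_left hq2 hv,
          mul_le_mul_of_nonneg_left hp3 hu, mul_le_mul_of_nonneg_left hq3 hv,
          mul_le_mul_of_nonneg_left hp4 hu, mul_le_mul_of_nonneg_left hq4 hv]
  · rintro p ⟨h1, h2, h3, h4⟩
    have heq : p = (1 - p 1 / b - p 2 / c) • ![0,0,0] + (p 2 / c) • ![a,0,c] +
        (p 1 / b - p 0 / a + p 2 / c) • ![0,b,0] + (p 0 / a - p 2 / c) • ![a,b,0] := by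
      rw [vec_eta' p, Matrix.smul_vec3, Matrix.smul_vec3, Matrix.smul_vec3, Matrix.smul_vec3,
        Matrix.vec3_add, Matrix.vec3_add, Matrix.vec3_add]
      simp only [smul_eq_mul]
      exact Matrix.vec3_eq (by simp only [Matrix.cons_val_zero, Matrix.cons_val_one, Matrix.cons_val_two, Matrix.head_cons, Matrix.tail_cons]; field_simp; all_goals ring) (by simp only [Matrix.cons_val_zero, Matrix.cons_val_one, Matrix.cons_val_two, Matrix.head_cons, Matrix.tail_cons]; field_simp; all_goals ring) (by simp only [Matrix.cons_val_zero, Matrix.cons_val_one, Matrix.cons_val_two, Matrix.head_cons, Matrix.tail_cons]; field_simp; all_goals ring)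
    refine mem_hull4' ?_ ?_ ?_ ?_ ?_ heq
    · have h : 1 - p 1 / b - p 2 / c = (a*b*c - a*c*p 1 - a*b*p 2) / (a*b*c) := by
        field_simp
      rw [h]; exact div_nonneg (by linarith) (by positivity)
    · exact div_nonneg h1 hc.le
    · have h : p 1 / b - p 0 / a + p 2 / c = (a*c*p 1 + a*b*p 2 - b*c*p 0) / (a*b*c) := by
        field_simp; ring
      rw [h]; exact div_nonneg (by linarith) (by positivity)
    · have h : p 0 / a - p 2 / c = (c*p 0 - a*p 2) / (a*c) := by field_simp
      rw [h]; exact div_nonneg (by linarith) (by positivity)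
    · field_simp
      all_goals ring

lemma mem_Icc3 {p : Fin 3 → ℝ} {a b c : ℝ} (h0 : 0 ≤ p 0) (h1 : 0 ≤ p 1) (h2 : 0 ≤ p 2)
    (h3 : p 0 ≤ a) (h4 : p 1 ≤ b) (h5 : p 2 ≤ c) :
    p ∈ Set.Icc (0 : Fin 3 → ℝ) ![a, b, c] :=
  ⟨fun i => by fin_cases i <;> assumption, fun i => by fin_cases i <;> assumption⟩

lemma Icc3_bounds {p : Fin 3 → ℝ} {a b c : ℝ} (h : p ∈ Set.Icc (0 : Fin 3 → ℝ) ![a, b, c]) :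
    0 ≤ p 0 ∧ 0 ≤ p 1 ∧ 0 ≤ p 2 ∧ p 0 ≤ a ∧ p 1 ≤ b ∧ p 2 ≤ c :=
  ⟨h.1 0, h.1 1, h.1 2, h.2 0, h.2 1, h.2 2⟩

set_option maxHeartbeats 1000000 in
/-- The reflection `σ(x,y,z) = ((a/c)z, y, (c/a)x)` about the vertical diagonal
plane `a·z = c·x` is a volume-preserving involution of the brick `K` exchanging
the two prisms `P₁`, `P₂`, and it carries the three tetrahedra subdividing `P₁`
onto three tetrahedra with pairwise disjoint interiors whose union is `P₂`. -/
theorem reflection_carries_prism_subdivision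
    (a b c : ℝ) (ha : 0 < a) (hb : 0 < b) (hc : 0 < c)
    (vE vF vB vA vH vG vC vD : Fin 3 → ℝ)
    (hE : vE = ![0, 0, 0]) (hF : vF = ![a, 0, 0]) (hB : vB = ![a, 0, c])
    (hA : vA = ![0, 0, c]) (hH : vH = ![0, b, 0]) (hG : vG = ![a, b, 0])
    (hC : vC = ![a, b, c]) (hD : vD = ![0, b, c])
    (K P₁ P₂ : Set (Fin 3 → ℝ))
    (hK : K = Set.Icc (0 : Fin 3 → ℝ) ![a, b, c])
    (hP₁ : P₁ = {p ∈ K | a * p 2 ≥ c * p 0})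
    (hP₂ : P₂ = {p ∈ K | a * p 2 ≤ c * p 0})
    (σ : (Fin 3 → ℝ) → (Fin 3 → ℝ))
    (hσ : ∀ p, σ p = ![(a / c) * p 2, p 1, (c / a) * p 0])
    (S : Fin 3 → Set (Fin 3 → ℝ))
    (hS : S = ![convexHull ℝ {vH, vB, vC, vG}, convexHull ℝ {vG, vF, vB, vE},
                convexHull ℝ {vE, vB, vH, vG}]) :
    IsLinearMap ℝ σ ∧
    (∀ p, σ (σ p) = p) ∧
    |Matrix.det !![0, 0, a / c; 0, 1, 0; c / a, 0, 0]| = 1 ∧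
    MeasurePreserving σ volume volume ∧
    σ '' K = K ∧
    σ '' P₁ = P₂ ∧
    σ '' (convexHull ℝ {vH, vB, vC, vD}) = S 0 ∧
    σ '' (convexHull ℝ {vD, vA, vB, vE}) = S 1 ∧
    σ '' (convexHull ℝ {vE, vB, vH, vD}) = S 2 ∧
    (∀ i j : Fin 3, i ≠ j → interior (S i) ∩ interior (S j) = ∅) ∧
    S 0 ∪ S 1 ∪ S 2 = P₂ := by
  have ha' : a ≠ 0 := ne_of_gt ha
  have hb' : b ≠ 0 := ne_of_gt hb
  have hc' : c ≠ 0 := ne_of_gt hc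
  -- linearity
  have hlin : IsLinearMap ℝ σ := by
    constructor
    · intro p q
      rw [hσ, hσ, hσ, Matrix.vec3_add]
      simp only [Pi.add_apply]
      exact Matrix.vec3_eq (by ring) rfl (by ring)
    · intro t p
      rw [hσ, hσ, Matrix.smul_vec3]
      simp only [Pi.smul_apply, smul_eq_mul]
      exact Matrix.vec3_eq (by ring) rfl (by ring)
  -- involution
  have hinv : ∀ p, σ (σ p) = p := by
    intro p
    rw [hσ, hσ]
    conv_rhs => rw [vec_eta' p]
    simp only [Matrix.cons_val_zero, Matrix.cons_val_one, Matrix.head_cons,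
      Matrix.cons_val_two, Matrix.tail_cons]
    exact Matrix.vec3_eq (by field_simp; all_goals ring) rfl (by field_simp; all_goals ring)
  -- determinant
  have hdet3 : (!![(0:ℝ), 0, a / c; 0, 1, 0; c / a, 0, 0]).det = -1 := by
    rw [Matrix.det_fin_three]
    norm_num [Matrix.cons_val_two]
    field_simp
  -- measure preserving
  have hmp : MeasurePreserving σ volume volume := by
    set L : (Fin 3 → ℝ) →ₗ[ℝ] (Fin 3 → ℝ) := IsLinearMap.mk' σ hlin with hL
    have hmat : LinearMap.toMatrix' L = !![(0:ℝ), 0, a / c; 0, 1, 0; c / a, 0, 0] := by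
      ext i j
      rw [LinearMap.toMatrix'_apply]
      show σ _ i = _
      rw [hσ]
      fin_cases i <;> fin_cases j <;>
        simp [Fin.ext_iff, Matrix.vecHead, Matrix.vecTail] <;> norm_num
    have hdetL : LinearMap.det L = -1 := by
      rw [← LinearMap.det_toMatrix', hmat, hdet3]
    have hcont : Continuous σ := L.continuous_on_pi
    refine ⟨hcont.measurable, ?_⟩
    have := Real.map_linearMap_volume_pi_eq_smul_volume_pi (f := L) (by rw [hdetL]; norm_num)
    rw [hdetL] at this
    norm_num at this
    exact this
  -- σ maps K to K
  subst hK hP₁ hP₂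
  have hKmap : ∀ p ∈ Set.Icc (0 : Fin 3 → ℝ) ![a, b, c], σ p ∈ Set.Icc (0 : Fin 3 → ℝ) ![a, b, c] := by
    intro p hp
    obtain ⟨l0, l1, l2, u0, u1, u2⟩ := Icc3_bounds hp
    rw [hσ]
    refine mem_Icc3 ?_ ?_ ?_ ?_ ?_ ?_ <;>
      simp only [Matrix.cons_val_zero, Matrix.cons_val_one, Matrix.head_cons,
        Matrix.cons_val_two, Matrix.tail_cons]
    · exact mul_nonneg (by positivity) l2
    · exact l1
    · exact mul_nonneg (by positivity) l0
    · rw [div_mul_eq_mul_div, div_le_iff₀ hc]; nlinarith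
    · exact u1
    · rw [div_mul_eq_mul_div, div_le_iff₀ ha]; nlinarith
  have hKimg : σ '' Set.Icc (0 : Fin 3 → ℝ) ![a, b, c] = Set.Icc (0 : Fin 3 → ℝ) ![a, b, c] := by
    apply Set.Subset.antisymm
    · rintro q ⟨p, hp, rfl⟩; exact hKmap p hp
    · intro p hp; exact ⟨σ p, hKmap p hp, hinv p⟩
  -- σ exchanges the prisms
  have hPimg : σ '' {p ∈ Set.Icc (0 : Fin 3 → ℝ) ![a, b, c] | a * p 2 ≥ c * p 0} =
      {p ∈ Set.Icc (0 : Fin 3 → ℝ) ![a, b, c] | a * p 2 ≤ c * p 0} := by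
    apply Set.Subset.antisymm
    · rintro q ⟨p, ⟨hpK, hpI⟩, rfl⟩
      refine ⟨hKmap p hpK, ?_⟩
      rw [hσ]
      simp only [Matrix.cons_val_zero, Matrix.cons_val_two, Matrix.tail_cons, Matrix.head_cons]
      rw [ge_iff_le] at hpI
      have e1 : a * (c / a * p 0) = c * p 0 := by field_simp; all_goals ring
      have e2 : c * (a / c * p 2) = a * p 2 := by field_simp; all_goals ring
      rw [e1, e2]; exact hpI
    · rintro q ⟨hqK, hqI⟩
      refine ⟨σ q, ⟨hKmap q hqK, ?_⟩, hinv q⟩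
      rw [hσ]
      simp only [Matrix.cons_val_zero, Matrix.cons_val_two, Matrix.tail_cons, Matrix.head_cons]
      rw [ge_iff_le]
      have e1 : a * (c / a * q 0) = c * q 0 := by field_simp; all_goals ring
      have e2 : c * (a / c * q 2) = a * q 2 := by field_simp; all_goals ring
      rw [e2, e1]; exact hqI
  -- images of vertices
  have hσE : σ vE = vE := by
    rw [hσ, hE]; exact Matrix.vec3_eq (by norm_num [Matrix.cons_val_two]) rfl (by norm_num [Matrix.cons_val_two])
  have hσF : σ vF = vA := by
    rw [hσ, hF, hA]; exact Matrix.vec3_eq (by norm_num [Matrix.cons_val_two]) rfl (by simp only [Matrix.cons_val_zero, Matrix.cons_val_two, Matrix.tail_cons, Matrix.head_cons]; field_simp)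
  have hσA : σ vA = vF := by
    rw [hσ, hA, hF]; exact Matrix.vec3_eq (by simp only [Matrix.cons_val_zero, Matrix.cons_val_two, Matrix.tail_cons, Matrix.head_cons]; field_simp) rfl (by norm_num [Matrix.cons_val_two])
  have hσB : σ vB = vB := by
    rw [hσ, hB]; exact Matrix.vec3_eq (by simp only [Matrix.cons_val_zero, Matrix.cons_val_two, Matrix.tail_cons, Matrix.head_cons]; field_simp) rfl (by simp only [Matrix.cons_val_zero, Matrix.cons_val_two, Matrix.tail_cons, Matrix.head_cons]; field_simp)
  have hσH : σ vH = vH := by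
    rw [hσ, hH]; exact Matrix.vec3_eq (by norm_num [Matrix.cons_val_two]) rfl (by norm_num [Matrix.cons_val_two])
  have hσC : σ vC = vC := by
    rw [hσ, hC]; exact Matrix.vec3_eq (by simp only [Matrix.cons_val_zero, Matrix.cons_val_two, Matrix.tail_cons, Matrix.head_cons]; field_simp) rfl (by simp only [Matrix.cons_val_zero, Matrix.cons_val_two, Matrix.tail_cons, Matrix.head_cons]; field_simp)
  have hσD : σ vD = vG := by
    rw [hσ, hD, hG]; exact Matrix.vec3_eq (by simp only [Matrix.cons_val_zero, Matrix.cons_val_two, Matrix.tail_cons, Matrix.head_cons]; field_simp) rfl (by norm_num [Matrix.cons_val_two])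
  -- S components
  have hS0 : S 0 = convexHull ℝ {vH, vB, vC, vG} := by rw [hS]; rfl
  have hS1 : S 1 = convexHull ℝ {vG, vF, vB, vE} := by rw [hS]; rfl
  have hS2 : S 2 = convexHull ℝ {vE, vB, vH, vG} := by rw [hS]; rfl
  -- images of the tetrahedra
  have himg0 : σ '' (convexHull ℝ {vH, vB, vC, vD}) = S 0 := by
    rw [hlin.image_convexHull, hS0, Set.image_insert_eq, Set.image_insert_eq,
      Set.image_insert_eq, Set.image_singleton, hσH, hσB, hσC, hσD]
  have himg1 : σ '' (convexHull ℝ {vD, vA, vB, vE}) = S 1 := by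
    rw [hlin.image_convexHull, hS1, Set.image_insert_eq, Set.image_insert_eq,
      Set.image_insert_eq, Set.image_singleton, hσD, hσA, hσB, hσE]
  have himg2 : σ '' (convexHull ℝ {vE, vB, vH, vD}) = S 2 := by
    rw [hlin.image_convexHull, hS2, Set.image_insert_eq, Set.image_insert_eq,
      Set.image_insert_eq, Set.image_singleton, hσE, hσB, hσH, hσD]
  -- half-space characterizations
  have hT0 : S 0 = {p : Fin 3 → ℝ | p 0 ≤ a ∧ p 1 ≤ b ∧ a*b*c ≤ a*c*p 1 + a*b*p 2 ∧
      a*p 2 ≤ c*p 0} := by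
    rw [hS0, hH, hB, hC, hG]; exact tetra0' a b c ha hb hc
  have hT1 : S 1 = {p : Fin 3 → ℝ | 0 ≤ p 1 ∧ 0 ≤ p 2 ∧ p 0 ≤ a ∧
      a*c*p 1 + a*b*p 2 ≤ b*c*p 0} := by
    rw [hS1, hG, hF, hB, hE]; exact tetra1' a b c ha hb hc
  have hT2 : S 2 = {p : Fin 3 → ℝ | 0 ≤ p 2 ∧ a*p 2 ≤ c*p 0 ∧
      b*c*p 0 ≤ a*c*p 1 + a*b*p 2 ∧ a*c*p 1 + a*b*p 2 ≤ a*b*c} := by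
    rw [hS2, hE, hB, hH, hG]; exact tetra2' a b c ha hb hc
  -- half-space bounds
  have k0 : ∀ p ∈ S 0, (0:ℝ) * p 0 + (-(a*c)) * p 1 + (-(a*b)) * p 2 ≤ -(a*b*c) := by
    intro p hp; rw [hT0] at hp; obtain ⟨-, -, h, -⟩ := hp; linarith
  have k1 : ∀ p ∈ S 1, (0:ℝ) * p 0 + (a*c) * p 1 + (a*b) * p 2 ≤ a*b*c := by
    intro p hp; rw [hT1] at hp; obtain ⟨-, -, h3, h4⟩ := hp
    nlinarith [mul_le_mul_of_nonneg_left h3 (mul_pos hb hc).le]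
  have k2 : ∀ p ∈ S 2, (0:ℝ) * p 0 + (a*c) * p 1 + (a*b) * p 2 ≤ a*b*c := by
    intro p hp; rw [hT2] at hp; obtain ⟨-, -, -, h⟩ := hp; linarith
  have k1' : ∀ p ∈ S 1, (-(b*c)) * p 0 + (a*c) * p 1 + (a*b) * p 2 ≤ 0 := by
    intro p hp; rw [hT1] at hp; obtain ⟨-, -, -, h⟩ := hp; linarith
  have k2' : ∀ p ∈ S 2, (b*c) * p 0 + (-(a*c)) * p 1 + (-(a*b)) * p 2 ≤ 0 := by
    intro p hp; rw [hT2] at hp; obtain ⟨-, -, h, -⟩ := hp; linarith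
  -- pairwise disjoint interiors
  have hd01 : interior (S 0) ∩ interior (S 1) = ∅ := by
    rw [Set.eq_empty_iff_forall_notMem]
    rintro p ⟨hp0, hp1⟩
    have l0 := interior_half' (v := ![0, -1, -1]) (by norm_num [Matrix.cons_val_two]; nlinarith) k0 hp0
    have l1 := interior_half' (v := ![0, 1, 1]) (by norm_num [Matrix.cons_val_two]; nlinarith) k1 hp1
    linarith
  have hd02 : interior (S 0) ∩ interior (S 2) = ∅ := by
    rw [Set.eq_empty_iff_forall_notMem]
    rintro p ⟨hp0, hp2⟩
    have l0 := interior_half' (v := ![0, -1, -1]) (by norm_num [Matrix.cons_val_two]; nlinarith) k0 hp0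
    have l2 := interior_half' (v := ![0, 1, 1]) (by norm_num [Matrix.cons_val_two]; nlinarith) k2 hp2
    linarith
  have hd12 : interior (S 1) ∩ interior (S 2) = ∅ := by
    rw [Set.eq_empty_iff_forall_notMem]
    rintro p ⟨hp1, hp2⟩
    have l1 := interior_half' (v := ![-1, 1, 1]) (by norm_num [Matrix.cons_val_two]; nlinarith) k1' hp1
    have l2 := interior_half' (v := ![1, -1, -1]) (by norm_num [Matrix.cons_val_two]; nlinarith) k2' hp2
    linarith
  -- union
  have hunion : S 0 ∪ S 1 ∪ S 2 = {p ∈ Set.Icc (0 : Fin 3 → ℝ) ![a, b, c] | a * p 2 ≤ c * p 0} := by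
    ext p
    simp only [Set.mem_union, hT0, hT1, hT2, Set.mem_setOf_eq]
    constructor
    · rintro ((⟨h1, h2, h3, h4⟩ | ⟨h1, h2, h3, h4⟩) | ⟨h1, h2, h3, h4⟩)
      · have hz0 : 0 ≤ p 2 := by
          nlinarith [mul_le_mul_of_nonneg_left h2 (mul_pos ha hc).le, mul_pos ha hb]
        have hx0 : 0 ≤ p 0 := by nlinarith
        have hzc : p 2 ≤ c := by nlinarith
        have hy0 : 0 ≤ p 1 := by
          nlinarith [mul_le_mul_of_nonneg_left hzc (mul_pos ha hb).le, mul_pos ha hc]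
        exact ⟨mem_Icc3 hx0 hy0 hz0 h1 h2 hzc, h4⟩
      · have hx0 : 0 ≤ p 0 := by
          nlinarith [mul_nonneg (mul_pos ha hc).le h1, mul_nonneg (mul_pos ha hb).le h2,
            mul_pos hb hc]
        have hdg : a * p 2 ≤ c * p 0 := by
          nlinarith [mul_nonneg (mul_pos ha hc).le h1, mul_pos hb hc, hb, h4]
        have hzc : p 2 ≤ c := by nlinarith
        have hyb : p 1 ≤ b := by
          nlinarith [mul_le_mul_of_nonneg_left h3 (mul_pos hb hc).le,
            mul_nonneg (mul_pos ha hb).le h2, mul_pos ha hc]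
        exact ⟨mem_Icc3 hx0 h1 h2 h3 hyb hzc, hdg⟩
      · have hx0 : 0 ≤ p 0 := by nlinarith
        have hxa : p 0 ≤ a := by nlinarith [mul_pos hb hc]
        have hzc : p 2 ≤ c := by nlinarith
        have hy0 : 0 ≤ p 1 := by
          nlinarith [mul_le_mul_of_nonneg_left h2 hb.le, mul_pos ha hc]
        have hyb : p 1 ≤ b := by
          nlinarith [mul_nonneg (mul_nonneg ha.le hb.le) h1, mul_pos ha hc]
        exact ⟨mem_Icc3 hx0 hy0 h1 hxa hyb hzc, h2⟩
    · rintro ⟨hpK, hdg⟩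
      obtain ⟨l0, l1, l2, u0, u1, u2⟩ := Icc3_bounds hpK
      by_cases hcase1 : a*b*c ≤ a*c*p 1 + a*b*p 2
      · exact Or.inl (Or.inl ⟨u0, u1, hcase1, hdg⟩)
      · push_neg at hcase1
        by_cases hcase2 : a*c*p 1 + a*b*p 2 ≤ b*c*p 0
        · exact Or.inl (Or.inr ⟨l1, l2, u0, hcase2⟩)
        · push_neg at hcase2
          exact Or.inr ⟨l2, hdg, hcase2.le, hcase1.le⟩
  refine ⟨hlin, hinv, by rw [hdet3]; norm_num, hmp, hKimg, hPimg, himg0, himg1, himg2, ?_, hunion⟩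
  intro i j hij
  fin_cases i <;> fin_cases j <;>
    first
    | exact absurd rfl hij
    | exact hd01
    | exact hd02
    | exact hd12
    | (rw [Set.inter_comm]; exact hd01)
    | (rw [Set.inter_comm]; exact hd02)
    | (rw [Set.inter_comm]; exact hd12)
end

section
/- Let p, q, r ∈ ℝ³ and w ∈ ℝ³ be such that q−p, r−p, w are linearly independent, and let P = conv{p, q, r, p+w, q+w, r+w} be the associated triangular prism. Then the three tetrahedra conv{q+w, q, r, p}, conv{p, r, p+w, q+w}, conv{p+w, r, r+w, q+w} have pairwise disjoint interiors, their union equals P, and each of the three has volume |det(q−p, r−p, w)|/6, i.e. one third of the volume of P. -/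
open MeasureTheory

open MeasureTheory Set Matrix

section Aux

/-- affine map from a matrix and translation vector -/
noncomputable def affM (A : Matrix (Fin 3) (Fin 3) ℝ) (c : Fin 3 → ℝ) :
    (Fin 3 → ℝ) →ᵃ[ℝ] (Fin 3 → ℝ) :=
  (Matrix.toLin' A).toAffineMap + AffineMap.const ℝ (Fin 3 → ℝ) c

lemma affM_apply (A : Matrix (Fin 3) (Fin 3) ℝ) (c x : Fin 3 → ℝ) :
    affM A c x = A.mulVec x + c := rfl

lemma vol_affM_image (A : Matrix (Fin 3) (Fin 3) ℝ) (c : Fin 3 → ℝ) (s : Set (Fin 3 → ℝ)) :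
    volume (affM A c '' s) = ENNReal.ofReal |A.det| * volume s := by
  have h : ⇑(affM A c) = (fun y => y + c) ∘ ⇑(Matrix.toLin' A) := rfl
  rw [h, Set.image_comp, Set.image_add_right, measure_preimage_add_right,
    Measure.addHaar_image_linearMap, LinearMap.det_toLin']

lemma hyperplane_null (f : (Fin 3 → ℝ) →ₗ[ℝ] ℝ) (x₀ : Fin 3 → ℝ) (hx : f x₀ ≠ 0) (c : ℝ) :
    volume {x : Fin 3 → ℝ | f x = c} = 0 := by
  have hker : LinearMap.ker f ≠ ⊤ := by
    intro h
    apply hx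
    have : x₀ ∈ LinearMap.ker f := h ▸ Submodule.mem_top
    simpa using this
  have h0 : volume (LinearMap.ker f : Set (Fin 3 → ℝ)) = 0 :=
    Measure.addHaar_submodule _ _ hker
  set v := (c / f x₀) • x₀ with hv
  have hfv : f v = c := by
    rw [hv, _root_.map_smul, smul_eq_mul, div_mul_cancel₀ _ hx]
  have heq : {x : Fin 3 → ℝ | f x = c} = (· + v) '' (LinearMap.ker f : Set (Fin 3 → ℝ)) := by
    ext x
    simp only [Set.mem_setOf_eq, Set.mem_image, SetLike.mem_coe, LinearMap.mem_ker]
    constructor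
    · intro h; exact ⟨x - v, by simp [map_sub, h, hfv], by abel⟩
    · rintro ⟨y, hy, rfl⟩; simp [map_add, hy, hfv]
  rw [heq, Set.image_add_right, measure_preimage_add_right, h0]

lemma mem_conv4 (v1 v2 v3 v4 x : Fin 3 → ℝ) (a1 a2 a3 a4 : ℝ)
    (h1 : 0 ≤ a1) (h2 : 0 ≤ a2) (h3 : 0 ≤ a3) (h4 : 0 ≤ a4)
    (hsum : a1 + a2 + a3 + a4 = 1)
    (hx : x = a1 • v1 + a2 • v2 + a3 • v3 + a4 • v4) :
    x ∈ convexHull ℝ ({v1, v2, v3, v4} : Set (Fin 3 → ℝ)) := by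
  have := (convex_convexHull ℝ ({v1, v2, v3, v4} : Set (Fin 3 → ℝ))).sum_mem
    (t := Finset.univ) (w := ![a1, a2, a3, a4]) (z := ![v1, v2, v3, v4])
    (fun i _ => by fin_cases i <;> simpa)
    (by simp [Fin.sum_univ_four, hsum])
    (fun i _ => by
      apply subset_convexHull
      fin_cases i
      · exact .inl rfl
      · exact .inr (.inl rfl)
      · exact .inr (.inr (.inl rfl))
      · exact .inr (.inr (.inr rfl)))
  rw [Fin.sum_univ_four] at this
  simpa [hx] using this

lemma vec6_five {α : Type*} (b1 b2 b3 b4 b5 b6 : α) : ![b1,b2,b3,b4,b5,b6] (5 : Fin 6) = b6 := rfl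

lemma mem_conv6 (v1 v2 v3 v4 v5 v6 x : Fin 3 → ℝ) (a1 a2 a3 a4 a5 a6 : ℝ)
    (h1 : 0 ≤ a1) (h2 : 0 ≤ a2) (h3 : 0 ≤ a3) (h4 : 0 ≤ a4) (h5 : 0 ≤ a5) (h6 : 0 ≤ a6)
    (hsum : a1 + a2 + a3 + a4 + a5 + a6 = 1)
    (hx : x = a1 • v1 + a2 • v2 + a3 • v3 + a4 • v4 + a5 • v5 + a6 • v6) :
    x ∈ convexHull ℝ ({v1, v2, v3, v4, v5, v6} : Set (Fin 3 → ℝ)) := by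
  have := (convex_convexHull ℝ ({v1, v2, v3, v4, v5, v6} : Set (Fin 3 → ℝ))).sum_mem
    (t := Finset.univ) (w := ![a1, a2, a3, a4, a5, a6]) (z := ![v1, v2, v3, v4, v5, v6])
    (fun i _ => by fin_cases i <;> simpa)
    (by simp [Fin.sum_univ_six, Matrix.cons_val_succ, vec6_five, hsum])
    (fun i _ => by
      apply subset_convexHull
      fin_cases i
      · exact .inl rfl
      · exact .inr (.inl rfl)
      · exact .inr (.inr (.inl rfl))
      · exact .inr (.inr (.inr (.inl rfl)))
      · exact .inr (.inr (.inr (.inr (.inl rfl))))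
      · exact .inr (.inr (.inr (.inr (.inr rfl)))))
  rw [Fin.sum_univ_six] at this
  simpa [vec6_five, hx] using this

/-! standard model -/

notation "E0" => (![1,0,0] : Fin 3 → ℝ)
notation "E1" => (![0,1,0] : Fin 3 → ℝ)
notation "E2" => (![0,0,1] : Fin 3 → ℝ)
notation "E02" => (![1,0,1] : Fin 3 → ℝ)
notation "E12" => (![0,1,1] : Fin 3 → ℝ)
notation "Z3" => (![0,0,0] : Fin 3 → ℝ)

def S0 : Set (Fin 3 → ℝ) := {x | 0 ≤ x 1 ∧ 0 ≤ x 2 ∧ x 2 ≤ x 0 ∧ x 0 + x 1 ≤ 1}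
def S1 : Set (Fin 3 → ℝ) := {x | 0 ≤ x 0 ∧ 0 ≤ x 1 ∧ x 0 ≤ x 2 ∧ x 1 + x 2 ≤ 1}
def S2 : Set (Fin 3 → ℝ) := {x | 0 ≤ x 0 ∧ 1 ≤ x 1 + x 2 ∧ x 2 ≤ 1 ∧ x 0 + x 1 ≤ 1}
def SP : Set (Fin 3 → ℝ) := {x | 0 ≤ x 0 ∧ 0 ≤ x 1 ∧ x 0 + x 1 ≤ 1 ∧ 0 ≤ x 2 ∧ x 2 ≤ 1}
def SP' : Set (Fin 3 → ℝ) := {x | x 0 ≤ 1 ∧ x 1 ≤ 1 ∧ 1 ≤ x 0 + x 1 ∧ 0 ≤ x 2 ∧ x 2 ≤ 1}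

lemma convex_S0 : Convex ℝ S0 := by
  intro x hx y hy a b ha hb hab
  obtain ⟨h1, h2, h3, h4⟩ := hx; obtain ⟨k1, k2, k3, k4⟩ := hy
  refine ⟨?_, ?_, ?_, ?_⟩ <;>
    simp only [Pi.add_apply, Pi.smul_apply, smul_eq_mul] <;> nlinarith

lemma convex_S1 : Convex ℝ S1 := by
  intro x hx y hy a b ha hb hab
  obtain ⟨h1, h2, h3, h4⟩ := hx; obtain ⟨k1, k2, k3, k4⟩ := hy
  refine ⟨?_, ?_, ?_, ?_⟩ <;>
    simp only [Pi.add_apply, Pi.smul_apply, smul_eq_mul] <;> nlinarith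

lemma convex_S2 : Convex ℝ S2 := by
  intro x hx y hy a b ha hb hab
  obtain ⟨h1, h2, h3, h4⟩ := hx; obtain ⟨k1, k2, k3, k4⟩ := hy
  refine ⟨?_, ?_, ?_, ?_⟩ <;>
    simp only [Pi.add_apply, Pi.smul_apply, smul_eq_mul] <;> nlinarith

lemma convex_SP : Convex ℝ SP := by
  intro x hx y hy a b ha hb hab
  obtain ⟨h1, h2, h3, h4, h5⟩ := hx; obtain ⟨k1, k2, k3, k4, k5⟩ := hy
  refine ⟨?_, ?_, ?_, ?_, ?_⟩ <;>
    simp only [Pi.add_apply, Pi.smul_apply, smul_eq_mul] <;> nlinarith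

lemma conv_T0 : convexHull ℝ ({E02, E0, E1, Z3} : Set (Fin 3 → ℝ)) = S0 := by
  apply le_antisymm
  · apply convexHull_min _ convex_S0
    rintro x (rfl | rfl | rfl | rfl) <;> norm_num [S0, Matrix.cons_val_two, Matrix.tail_cons, Matrix.head_cons]
  · intro x hx
    obtain ⟨h1, h2, h3, h4⟩ := hx
    apply mem_conv4 _ _ _ _ _ (x 2) (x 0 - x 2) (x 1) (1 - x 0 - x 1)
      (by linarith) (by linarith) (by linarith) (by linarith) (by ring)
    funext j
    fin_cases j <;> simp <;> ring

lemma conv_T1 : convexHull ℝ ({Z3, E1, E2, E02} : Set (Fin 3 → ℝ)) = S1 := by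
  apply le_antisymm
  · apply convexHull_min _ convex_S1
    rintro x (rfl | rfl | rfl | rfl) <;> norm_num [S1, Matrix.cons_val_two, Matrix.tail_cons, Matrix.head_cons]
  · intro x hx
    obtain ⟨h1, h2, h3, h4⟩ := hx
    apply mem_conv4 _ _ _ _ _ (1 - x 1 - x 2) (x 1) (x 2 - x 0) (x 0)
      (by linarith) (by linarith) (by linarith) (by linarith) (by ring)
    funext j
    fin_cases j <;> simp <;> ring

lemma conv_T2 : convexHull ℝ ({E2, E1, E12, E02} : Set (Fin 3 → ℝ)) = S2 := by
  apply le_antisymm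
  · apply convexHull_min _ convex_S2
    rintro x (rfl | rfl | rfl | rfl) <;> norm_num [S2, Matrix.cons_val_two, Matrix.tail_cons, Matrix.head_cons]
  · intro x hx
    obtain ⟨h1, h2, h3, h4⟩ := hx
    apply mem_conv4 _ _ _ _ _ (1 - x 0 - x 1) (1 - x 2) (x 1 + x 2 - 1) (x 0)
      (by linarith) (by linarith) (by linarith) (by linarith) (by ring)
    funext j
    fin_cases j <;> simp <;> ring

lemma conv_P : convexHull ℝ ({Z3, E0, E1, E2, E02, E12} : Set (Fin 3 → ℝ)) = SP := by
  apply le_antisymm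
  · apply convexHull_min _ convex_SP
    rintro x (rfl | rfl | rfl | rfl | rfl | rfl) <;> norm_num [SP, Matrix.cons_val_two, Matrix.tail_cons, Matrix.head_cons]
  · intro x hx
    obtain ⟨h1, h2, h3, h4, h5⟩ := hx
    apply mem_conv6 _ _ _ _ _ _ _
      ((1 - x 0 - x 1) * (1 - x 2)) (x 0 * (1 - x 2)) (x 1 * (1 - x 2))
      ((1 - x 0 - x 1) * x 2) (x 0 * x 2) (x 1 * x 2)
      (mul_nonneg (by linarith) (by linarith)) (mul_nonneg (by linarith) (by linarith))
      (mul_nonneg (by linarith) (by linarith)) (mul_nonneg (by linarith) (by linarith))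
      (mul_nonneg (by linarith) (by linarith)) (mul_nonneg (by linarith) (by linarith))
      (by ring)
    funext j
    fin_cases j <;> simp <;> ring

lemma union_S : S0 ∪ S1 ∪ S2 = SP := by
  ext x
  constructor
  · rintro ((⟨h1, h2, h3, h4⟩ | ⟨h1, h2, h3, h4⟩) | ⟨h1, h2, h3, h4⟩) <;>
      exact ⟨by linarith, by linarith, by linarith, by linarith, by linarith⟩
  · rintro ⟨h1, h2, h3, h4, h5⟩
    by_cases hc : x 2 ≤ x 0
    · exact Or.inl (Or.inl ⟨h2, h4, hc, h3⟩)
    · push_neg at hc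
      by_cases hd : x 1 + x 2 ≤ 1
      · exact Or.inl (Or.inr ⟨h1, h2, hc.le, hd⟩)
      · push_neg at hd
        exact Or.inr ⟨h1, hd.le, h5, h3⟩

lemma meas_S0 : MeasurableSet S0 :=
  ((measurableSet_le measurable_const (measurable_pi_apply 1)).inter
    ((measurableSet_le measurable_const (measurable_pi_apply 2)).inter
      ((measurableSet_le (measurable_pi_apply 2) (measurable_pi_apply 0)).inter
        (measurableSet_le ((measurable_pi_apply 0).add (measurable_pi_apply 1))
          measurable_const))))

lemma meas_S1 : MeasurableSet S1 :=
  ((measurableSet_le measurable_const (measurable_pi_apply 0)).inter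
    ((measurableSet_le measurable_const (measurable_pi_apply 1)).inter
      ((measurableSet_le (measurable_pi_apply 0) (measurable_pi_apply 2)).inter
        (measurableSet_le ((measurable_pi_apply 1).add (measurable_pi_apply 2))
          measurable_const))))

lemma meas_S2 : MeasurableSet S2 :=
  ((measurableSet_le measurable_const (measurable_pi_apply 0)).inter
    ((measurableSet_le measurable_const ((measurable_pi_apply 1).add (measurable_pi_apply 2))).inter
      ((measurableSet_le (measurable_pi_apply 2) measurable_const).inter
        (measurableSet_le ((measurable_pi_apply 0).add (measurable_pi_apply 1))
          measurable_const))))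

lemma meas_SP' : MeasurableSet SP' :=
  ((measurableSet_le (measurable_pi_apply 0) measurable_const).inter
    ((measurableSet_le (measurable_pi_apply 1) measurable_const).inter
      ((measurableSet_le measurable_const ((measurable_pi_apply 0).add (measurable_pi_apply 1))).inter
        ((measurableSet_le measurable_const (measurable_pi_apply 2)).inter
          (measurableSet_le (measurable_pi_apply 2) measurable_const)))))

lemma null_02 : volume {x : Fin 3 → ℝ | x 0 = x 2} = 0 := by
  have h := hyperplane_null ((LinearMap.proj 0 : ((Fin 3) → ℝ) →ₗ[ℝ] ℝ) - LinearMap.proj 2)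
    E0 (by norm_num [Matrix.cons_val_two, Matrix.tail_cons, Matrix.head_cons]) 0
  convert h using 2 with x
  simp [sub_eq_zero]

lemma null_12 : volume {x : Fin 3 → ℝ | x 1 + x 2 = 1} = 0 := by
  exact hyperplane_null ((LinearMap.proj 1 : ((Fin 3) → ℝ) →ₗ[ℝ] ℝ) + LinearMap.proj 2)
    E1 (by norm_num [Matrix.cons_val_two, Matrix.tail_cons, Matrix.head_cons]) 1

lemma null_01 : volume {x : Fin 3 → ℝ | x 0 + x 1 = 1} = 0 := by
  exact hyperplane_null ((LinearMap.proj 0 : ((Fin 3) → ℝ) →ₗ[ℝ] ℝ) + LinearMap.proj 1)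
    E0 (by norm_num) 1

lemma vol_SP : volume SP = 2⁻¹ := by
  have hQ : SP ∪ SP' = Set.pi Set.univ (fun _ : Fin 3 => Icc (0:ℝ) 1) := by
    ext x
    simp only [Set.mem_pi, Set.mem_univ, forall_true_left, Set.mem_Icc, Set.mem_union]
    constructor
    · rintro (⟨h1, h2, h3, h4, h5⟩ | ⟨h1, h2, h3, h4, h5⟩) <;>
        · intro i
          fin_cases i <;> constructor <;> simp <;> linarith
    · intro h
      have h0 := h 0; have h1 := h 1; have h2 := h 2
      by_cases hc : x 0 + x 1 ≤ 1
      · exact Or.inl ⟨h0.1, h1.1, hc, h2.1, h2.2⟩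
      · push_neg at hc
        exact Or.inr ⟨h0.2, h1.2, hc.le, h2.1, h2.2⟩
  have hvolQ : volume (SP ∪ SP') = 1 := by
    rw [hQ, volume_pi_pi]
    simp [Real.volume_Icc]
  have hdisj : volume (SP ∩ SP') = 0 := by
    apply measure_mono_null _ null_01
    rintro x ⟨⟨_, _, h3, _, _⟩, ⟨_, _, k3, _, _⟩⟩
    exact le_antisymm h3 k3
  have hsum : volume SP + volume SP' = 1 := by
    rw [← measure_union₀ meas_SP'.nullMeasurableSet hdisj, hvolQ]
  have hSP' : volume SP' = volume SP := by
    have himg : affM !![-1,0,0;0,-1,0;0,0,1] ![1,1,0] '' SP = SP' := by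
      ext y
      constructor
      · rintro ⟨x, ⟨h1, h2, h3, h4, h5⟩, rfl⟩
        refine ⟨?_, ?_, ?_, ?_, ?_⟩ <;>
          simp [affM_apply, Matrix.mulVec, dotProduct, Fin.sum_univ_three] <;> linarith
      · rintro ⟨h1, h2, h3, h4, h5⟩
        refine ⟨affM !![-1,0,0;0,-1,0;0,0,1] ![1,1,0] y, ⟨?_, ?_, ?_, ?_, ?_⟩, ?_⟩
        · simp [affM_apply, Matrix.mulVec, dotProduct, Fin.sum_univ_three]; linarith
        · simp [affM_apply, Matrix.mulVec, dotProduct, Fin.sum_univ_three]; linarith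
        · simp [affM_apply, Matrix.mulVec, dotProduct, Fin.sum_univ_three]; linarith
        · simp [affM_apply, Matrix.mulVec, dotProduct, Fin.sum_univ_three]; linarith
        · simp [affM_apply, Matrix.mulVec, dotProduct, Fin.sum_univ_three]; linarith
        · funext j
          fin_cases j <;>
            simp [affM_apply, Matrix.mulVec, dotProduct, Fin.sum_univ_three] <;> ring
    rw [← himg, vol_affM_image]
    norm_num [Matrix.det_fin_three, Matrix.cons_val_two, Matrix.tail_cons, Matrix.head_cons]
  rw [hSP', ← two_mul] at hsum
  have := congrArg (fun t => (2 : ENNReal)⁻¹ * t) hsum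
  simpa [← mul_assoc, ENNReal.inv_mul_cancel (two_ne_zero) (ENNReal.ofNat_ne_top)] using this


lemma vol_conv_T0 : volume (convexHull ℝ ({E02, E0, E1, Z3} : Set (Fin 3 → ℝ))) = volume S0 := by
  rw [conv_T0]

lemma vol_S1_eq : volume S1 = volume S0 := by
  have h1 : affM !![0,0,1;1,0,-1;0,1,1] 0 E02 = E02 := by
    funext j; fin_cases j <;> norm_num [affM_apply, Matrix.mulVec, dotProduct, Fin.sum_univ_three]
  have h2 : affM !![0,0,1;1,0,-1;0,1,1] 0 E0 = E1 := by
    funext j; fin_cases j <;> norm_num [affM_apply, Matrix.mulVec, dotProduct, Fin.sum_univ_three]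
  have h3 : affM !![0,0,1;1,0,-1;0,1,1] 0 E1 = E2 := by
    funext j; fin_cases j <;> norm_num [affM_apply, Matrix.mulVec, dotProduct, Fin.sum_univ_three]
  have h4 : affM !![0,0,1;1,0,-1;0,1,1] 0 Z3 = Z3 := by
    funext j; fin_cases j <;> norm_num [affM_apply, Matrix.mulVec, dotProduct, Fin.sum_univ_three]
  have himg : affM !![0,0,1;1,0,-1;0,1,1] 0 '' (convexHull ℝ ({E02, E0, E1, Z3} : Set (Fin 3 → ℝ)))
      = convexHull ℝ ({Z3, E1, E2, E02} : Set (Fin 3 → ℝ)) := by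
    rw [AffineMap.image_convexHull]
    congr 1
    rw [Set.image_insert_eq, Set.image_insert_eq, Set.image_insert_eq, Set.image_singleton,
      h1, h2, h3, h4]
    ext y; constructor <;> rintro (rfl | rfl | rfl | rfl) <;> simp
  rw [← conv_T1, ← himg, vol_affM_image, conv_T0]
  norm_num [Matrix.det_fin_three, Matrix.cons_val_two, Matrix.tail_cons, Matrix.head_cons]

lemma vol_S2_eq : volume S2 = volume S0 := by
  have h1 : affM !![1,0,-1;0,1,1;0,0,-1] E2 E02 = E1 := by
    funext j; fin_cases j <;> norm_num [affM_apply, Matrix.mulVec, dotProduct, Fin.sum_univ_three]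
  have h2 : affM !![1,0,-1;0,1,1;0,0,-1] E2 E0 = E02 := by
    funext j; fin_cases j <;> norm_num [affM_apply, Matrix.mulVec, dotProduct, Fin.sum_univ_three]
  have h3 : affM !![1,0,-1;0,1,1;0,0,-1] E2 E1 = E12 := by
    funext j; fin_cases j <;> norm_num [affM_apply, Matrix.mulVec, dotProduct, Fin.sum_univ_three]
  have h4 : affM !![1,0,-1;0,1,1;0,0,-1] E2 Z3 = E2 := by
    funext j; fin_cases j <;> norm_num [affM_apply, Matrix.mulVec, dotProduct, Fin.sum_univ_three]
  have himg : affM !![1,0,-1;0,1,1;0,0,-1] E2 '' (convexHull ℝ ({E02, E0, E1, Z3} : Set (Fin 3 → ℝ)))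
      = convexHull ℝ ({E2, E1, E12, E02} : Set (Fin 3 → ℝ)) := by
    rw [AffineMap.image_convexHull]
    congr 1
    rw [Set.image_insert_eq, Set.image_insert_eq, Set.image_insert_eq, Set.image_singleton,
      h1, h2, h3, h4]
    ext y; constructor <;> rintro (rfl | rfl | rfl | rfl) <;> simp
  rw [← conv_T2, ← himg, vol_affM_image, conv_T0,
    show (!![1,0,-1;0,1,1;0,0,-1] : Matrix (Fin 3) (Fin 3) ℝ).det = -1 by
      simp [Matrix.det_fin_three, Matrix.vecHead, Matrix.vecTail]]
  norm_num

lemma disj_S0_S1 : volume (S0 ∩ S1) = 0 := by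
  apply measure_mono_null _ null_02
  rintro x ⟨⟨_, _, h3, _⟩, ⟨_, _, k3, _⟩⟩
  exact le_antisymm k3 h3

lemma disj_S01_S2 : volume ((S0 ∪ S1) ∩ S2) = 0 := by
  apply measure_mono_null _ null_12
  rintro x ⟨(⟨h1, h2, h3, h4⟩ | ⟨h1, h2, h3, h4⟩), ⟨k1, k2, k3, k4⟩⟩ <;>
    · show x 1 + x 2 = 1
      linarith

lemma vol_S0_val : volume S0 = 6⁻¹ := by
  have hadd : volume S0 + volume S1 + volume S2 = 2⁻¹ := by
    rw [← measure_union₀ meas_S1.nullMeasurableSet disj_S0_S1,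
      ← measure_union₀ meas_S2.nullMeasurableSet disj_S01_S2, union_S, vol_SP]
  rw [vol_S1_eq, vol_S2_eq] at hadd
  have h3 : (3 : ENNReal) * volume S0 = 2⁻¹ := by
    rw [show (3 : ENNReal) * volume S0 = volume S0 + volume S0 + volume S0 by ring]
    exact hadd
  have := congrArg (fun t => (3 : ENNReal)⁻¹ * t) h3
  simp only [← mul_assoc, ENNReal.inv_mul_cancel (by norm_num : (3:ENNReal) ≠ 0)
    (by norm_num : (3:ENNReal) ≠ ⊤), one_mul] at this
  rw [this, ← ENNReal.mul_inv (by norm_num) (by norm_num)]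
  norm_num

lemma vol_S1_val : volume S1 = 6⁻¹ := by rw [vol_S1_eq, vol_S0_val]
lemma vol_S2_val : volume S2 = 6⁻¹ := by rw [vol_S2_eq, vol_S0_val]

lemma disj_S0_S2 : volume (S0 ∩ S2) = 0 := by
  apply measure_mono_null _ null_12
  rintro x ⟨⟨h1, h2, h3, h4⟩, ⟨k1, k2, k3, k4⟩⟩
  show x 1 + x 2 = 1
  linarith

lemma disj_S1_S2 : volume (S1 ∩ S2) = 0 := by
  apply measure_mono_null _ null_12
  rintro x ⟨⟨h1, h2, h3, h4⟩, ⟨k1, k2, k3, k4⟩⟩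
  show x 1 + x 2 = 1
  linarith

lemma open_null_empty (U : Set (Fin 3 → ℝ)) (hU : IsOpen U) (h : volume U = 0) : U = ∅ := by
  by_contra h'
  exact absurd h (hU.measure_pos volume (Set.nonempty_iff_ne_empty.mpr h')).ne'

end Aux

/-- The 'vertex-to-edge' subdivision of a triangular prism
`P = conv{p, q, r, p+w, q+w, r+w}` into three tetrahedra: the three
tetrahedra have pairwise disjoint interiors, their union is `P`, and each has
volume `|det(q−p, r−p, w)|/6`, one third of the volume of `P`. -/
theorem prism_three_tetrahedra_subdivision
    (p q r w : Fin 3 → ℝ)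
    (hind : LinearIndependent ℝ ![q - p, r - p, w])
    (P : Set (Fin 3 → ℝ))
    (hP : P = convexHull ℝ {p, q, r, p + w, q + w, r + w})
    (T : Fin 3 → Set (Fin 3 → ℝ))
    (hT : T = ![convexHull ℝ {q + w, q, r, p},
                convexHull ℝ {p, r, p + w, q + w},
                convexHull ℝ {p + w, r, r + w, q + w}]) :
    (∀ i j : Fin 3, i ≠ j → interior (T i) ∩ interior (T j) = ∅) ∧
    T 0 ∪ T 1 ∪ T 2 = P ∧
    (∀ i : Fin 3,
      volume (T i) =
        ENNReal.ofReal (|Matrix.det (Matrix.of ![q - p, r - p, w])| / 6) ∧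
      volume (T i) = volume P / 3) := by
  set M := Matrix.of ![q - p, r - p, w] with hM
  set Φ := affM Mᵀ p with hΦdef
  have hΦ : ∀ x, Φ x = Mᵀ.mulVec x + p := fun _ => rfl
  have hmv : ∀ x : Fin 3 → ℝ, Mᵀ.mulVec x = x 0 • (q - p) + x 1 • (r - p) + x 2 • w := by
    intro x
    funext j
    simp [hM, Matrix.mulVec, dotProduct, Fin.sum_univ_three]
    ring
  have e1 : Φ Z3 = p := by
    rw [hΦ, hmv]; funext j; simp
  have e2 : Φ E0 = q := by
    rw [hΦ, hmv]; funext j; simp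
  have e3 : Φ E1 = r := by
    rw [hΦ, hmv]; funext j; simp
  have e4 : Φ E2 = p + w := by
    rw [hΦ, hmv]; funext j; simp; ring
  have e5 : Φ E02 = q + w := by
    rw [hΦ, hmv]; funext j; simp; ring
  have e6 : Φ E12 = r + w := by
    rw [hΦ, hmv]; funext j; simp; ring
  have hT0 : T 0 = Φ '' S0 := by
    rw [hT, ← conv_T0, AffineMap.image_convexHull]
    simp only [Matrix.cons_val_zero]
    rw [Set.image_insert_eq, Set.image_insert_eq, Set.image_insert_eq, Set.image_singleton,
      e5, e2, e3, e1]
  have hT1 : T 1 = Φ '' S1 := by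
    rw [hT, ← conv_T1, AffineMap.image_convexHull]
    simp only [Matrix.cons_val_one, Matrix.head_cons, Matrix.cons_val_zero]
    rw [Set.image_insert_eq, Set.image_insert_eq, Set.image_insert_eq, Set.image_singleton,
      e1, e3, e4, e5]
  have hT2 : T 2 = Φ '' S2 := by
    rw [hT, ← conv_T2, AffineMap.image_convexHull]
    simp only [Matrix.cons_val_two, Matrix.tail_cons, Matrix.head_cons]
    rw [Set.image_insert_eq, Set.image_insert_eq, Set.image_insert_eq, Set.image_singleton,
      e4, e3, e6, e5]
  have hPP : P = Φ '' SP := by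
    rw [hP, ← conv_P, AffineMap.image_convexHull]
    rw [Set.image_insert_eq, Set.image_insert_eq, Set.image_insert_eq, Set.image_insert_eq,
      Set.image_insert_eq, Set.image_singleton, e1, e2, e3, e4, e5, e6]
  have hinj : Function.Injective Φ := by
    have hli := Fintype.linearIndependent_iff.mp hind
    intro a b hab
    have h0 : Mᵀ.mulVec a = Mᵀ.mulVec b := by
      have h := hab
      rw [hΦ, hΦ] at h
      exact add_right_cancel h
    have h2 : a 0 • (q - p) + a 1 • (r - p) + a 2 • w
        = b 0 • (q - p) + b 1 • (r - p) + b 2 • w := by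
      rw [← hmv a, ← hmv b, h0]
    have hg : ∀ i, (a - b) i = 0 := by
      apply hli
      rw [Fin.sum_univ_three]
      simp only [Pi.sub_apply, Matrix.cons_val_zero, Matrix.cons_val_one, Matrix.head_cons,
        Matrix.cons_val_two, Matrix.tail_cons]
      rw [sub_smul, sub_smul, sub_smul]
      rw [show a 0 • (q - p) - b 0 • (q - p) + (a 1 • (r - p) - b 1 • (r - p))
          + (a 2 • w - b 2 • w)
          = (a 0 • (q - p) + a 1 • (r - p) + a 2 • w)
            - (b 0 • (q - p) + b 1 • (r - p) + b 2 • w) by abel, h2, sub_self]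
    funext i
    have := hg i
    simpa [sub_eq_zero] using this
  have hvol : ∀ s : Set (Fin 3 → ℝ),
      volume (Φ '' s) = ENNReal.ofReal |M.det| * volume s := by
    intro s
    rw [hΦdef, vol_affM_image, Matrix.det_transpose]
  have h01 : volume (T 0 ∩ T 1) = 0 := by
    rw [hT0, hT1, ← Set.image_inter hinj, hvol, disj_S0_S1, mul_zero]
  have h02 : volume (T 0 ∩ T 2) = 0 := by
    rw [hT0, hT2, ← Set.image_inter hinj, hvol, disj_S0_S2, mul_zero]
  have h12 : volume (T 1 ∩ T 2) = 0 := by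
    rw [hT1, hT2, ← Set.image_inter hinj, hvol, disj_S1_S2, mul_zero]
  have hpair : ∀ i j : Fin 3, i ≠ j → volume (T i ∩ T j) = 0 := by
    intro i j hij
    fin_cases i <;> fin_cases j <;>
      first
        | (exact absurd rfl hij)
        | exact h01
        | exact h02
        | exact h12
        | (rw [Set.inter_comm]; first | exact h01 | exact h02 | exact h12)
  refine ⟨?_, ?_, ?_⟩
  · intro i j hij
    exact open_null_empty _ (isOpen_interior.inter isOpen_interior)
      (measure_mono_null (Set.inter_subset_inter interior_subset interior_subset)
        (hpair i j hij))
  · rw [hT0, hT1, hT2, ← Set.image_union, ← Set.image_union, union_S, ← hPP]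
  · have hvP : volume P = ENNReal.ofReal |M.det| * 2⁻¹ := by
      rw [hPP, hvol, vol_SP]
    have hvTi : ∀ i : Fin 3, volume (T i) = ENNReal.ofReal |M.det| * 6⁻¹ := by
      intro i
      fin_cases i
      · show volume (T 0) = _
        rw [hT0, hvol, vol_S0_val]
      · show volume (T 1) = _
        rw [hT1, hvol, vol_S1_val]
      · show volume (T 2) = _
        rw [hT2, hvol, vol_S2_val]
    intro i
    constructor
    · rw [hvTi i, div_eq_mul_inv, ENNReal.ofReal_mul (abs_nonneg _),
        ENNReal.ofReal_inv_of_pos (by norm_num : (0:ℝ) < 6)]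
      norm_num
    · rw [hvTi i, hvP, div_eq_mul_inv, mul_assoc, ← ENNReal.mul_inv (by norm_num) (by norm_num)]
      norm_num
end
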